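/- Let x_1,…,x_n and y_1,…,y_m be points in ℝ^d and let k ≤ d. Define C_k² = sup over U ∈ S(d,k) of the infimum over couplings π ∈ Π of ∑_{i,j} π_{ij} ‖UUᵀx_i − y_j‖², and S_k² = infimum over couplings π ∈ Π of the supremum over U ∈ S(d,k) of ∑_{i,j} π_{ij} ‖UUᵀx_i − UUᵀy_j‖². Then C_k² ≤ S_k² + sup over U ∈ S(d,k) of (1/m) ∑_{j=1}^m ‖(I_d − UUᵀ) y_j‖². -/

import Mathlib

open Matrix Finset

/-- The Euclidean (ℓ2) norm of a vector in `ℝ^d`. -/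
noncomputable def eucNormSq_enorm_port {d : ℕ} (v : Fin d → ℝ) : ℝ := Real.sqrt (∑ i, v i ^ 2)

/-- A coupling between the uniform empirical measures on `n` positives and `m` negatives. -/
def IsCoupling {n m : ℕ} (π : Matrix (Fin n) (Fin m) ℝ) : Prop :=
  (∀ i j, 0 ≤ π i j) ∧ (∀ i, ∑ j, π i j = 1 / (n : ℝ)) ∧ (∀ j, ∑ i, π i j = 1 / (m : ℝ))

lemma enorm_sq {d : ℕ} (v : Fin d → ℝ) : eucNormSq_enorm_port v ^ 2 = ∑ i, v i ^ 2 :=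
  Real.sq_sqrt (Finset.sum_nonneg fun _ _ => sq_nonneg _)

lemma dot_mulVec' {a b : ℕ} (A : Matrix (Fin a) (Fin b) ℝ) (u : Fin b → ℝ) (w : Fin a → ℝ) :
    (A.mulVec u) ⬝ᵥ w = u ⬝ᵥ (Aᵀ.mulVec w) := by
  simp only [dotProduct, Matrix.mulVec, dotProduct, Matrix.transpose_apply,
    Finset.sum_mul, Finset.mul_sum]
  rw [Finset.sum_comm]
  exact Finset.sum_congr rfl fun i _ => Finset.sum_congr rfl fun j _ => by ring

lemma pyth' {d : ℕ} (a b : Fin d → ℝ) (h : a ⬝ᵥ b = 0) :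
    ∑ i, (a i + b i) ^ 2 = ∑ i, a i ^ 2 + ∑ i, b i ^ 2 := by
  have h' : ∑ i, a i * b i = 0 := h
  have h2 : ∑ i, (a i + b i) ^ 2 = ∑ i, (a i ^ 2 + b i ^ 2 + 2 * (a i * b i)) :=
    Finset.sum_congr rfl fun i _ => by ring
  rw [h2, Finset.sum_add_distrib, Finset.sum_add_distrib, ← Finset.mul_sum, h']
  ring

lemma proj_orth {d k : ℕ} (U : Matrix (Fin d) (Fin k) ℝ) (hU : Uᵀ * U = 1) (u w : Fin d → ℝ) :
    ((U * Uᵀ).mulVec u) ⬝ᵥ ((1 - U * Uᵀ).mulVec w) = 0 := by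
  have hsymm : (U * Uᵀ)ᵀ = U * Uᵀ := by rw [Matrix.transpose_mul, Matrix.transpose_transpose]
  have hidem : (U * Uᵀ) * (U * Uᵀ) = U * Uᵀ := by
    rw [Matrix.mul_assoc, ← Matrix.mul_assoc Uᵀ U Uᵀ, hU, Matrix.one_mul]
  rw [dot_mulVec', hsymm, Matrix.mulVec_mulVec, Matrix.mul_sub, Matrix.mul_one, hidem,
    sub_self, Matrix.zero_mulVec, dotProduct_zero]

lemma proj_split {d k : ℕ} (U : Matrix (Fin d) (Fin k) ℝ) (hU : Uᵀ * U = 1) (v : Fin d → ℝ) :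
    ∑ i, v i ^ 2 = ∑ i, ((U * Uᵀ).mulVec v) i ^ 2 + ∑ i, ((1 - U * Uᵀ).mulVec v) i ^ 2 := by
  rw [← pyth' _ _ (proj_orth U hU v v)]
  refine Finset.sum_congr rfl fun i _ => ?_
  rw [Matrix.sub_mulVec, Matrix.one_mulVec]
  simp

lemma contract1 {d k : ℕ} (U : Matrix (Fin d) (Fin k) ℝ) (hU : Uᵀ * U = 1) (v : Fin d → ℝ) :
    ∑ i, ((U * Uᵀ).mulVec v) i ^ 2 ≤ ∑ i, v i ^ 2 := by
  rw [proj_split U hU v]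
  exact le_add_of_nonneg_right (Finset.sum_nonneg fun _ _ => sq_nonneg _)

lemma contract2 {d k : ℕ} (U : Matrix (Fin d) (Fin k) ℝ) (hU : Uᵀ * U = 1) (v : Fin d → ℝ) :
    ∑ i, ((1 - U * Uᵀ).mulVec v) i ^ 2 ≤ ∑ i, v i ^ 2 := by
  rw [proj_split U hU v]
  exact le_add_of_nonneg_left (Finset.sum_nonneg fun _ _ => sq_nonneg _)

lemma key_split {d k : ℕ} (U : Matrix (Fin d) (Fin k) ℝ) (hU : Uᵀ * U = 1) (v w : Fin d → ℝ) :
    ∑ i, ((U * Uᵀ).mulVec v - w) i ^ 2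
      = ∑ i, ((U * Uᵀ).mulVec v - (U * Uᵀ).mulVec w) i ^ 2
        + ∑ i, ((1 - U * Uᵀ).mulVec w) i ^ 2 := by
  have horth : ((U * Uᵀ).mulVec v - (U * Uᵀ).mulVec w) ⬝ᵥ (-((1 - U * Uᵀ).mulVec w)) = 0 := by
    rw [← Matrix.mulVec_sub, dotProduct_neg, proj_orth U hU (v - w) w, neg_zero]
  have hb := pyth' _ _ horth
  have hcomp : ∀ i, (((U * Uᵀ).mulVec v - (U * Uᵀ).mulVec w) i + (-((1 - U * Uᵀ).mulVec w)) i)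
      = ((U * Uᵀ).mulVec v - w) i := fun i => by
    rw [Matrix.sub_mulVec, Matrix.one_mulVec]
    simp only [Pi.sub_apply, Pi.neg_apply]
    ring
  have h1 : ∑ i, ((U * Uᵀ).mulVec v - w) i ^ 2
      = ∑ i, (((U * Uᵀ).mulVec v - (U * Uᵀ).mulVec w) i + (-((1 - U * Uᵀ).mulVec w)) i) ^ 2 :=
    Finset.sum_congr rfl fun i _ => by rw [hcomp]
  rw [h1, hb]
  congr 1
  exact Finset.sum_congr rfl fun i _ => by simp

lemma exists_stiefel {d k : ℕ} (hkd : k ≤ d) :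
    ∃ U : Matrix (Fin d) (Fin k) ℝ, Uᵀ * U = 1 := by
  refine ⟨Matrix.of fun i j => if i = Fin.castLE hkd j then 1 else 0, ?_⟩
  ext a b
  simp only [Matrix.mul_apply, Matrix.transpose_apply, Matrix.of_apply, ite_mul, one_mul,
    zero_mul]
  rw [Finset.sum_ite_eq' Finset.univ (Fin.castLE hkd a)]
  simp [Matrix.one_apply, Fin.castLE_inj]

lemma exists_coupling {n m : ℕ} (hn : 0 < n) (hm : 0 < m) :
    ∃ π : Matrix (Fin n) (Fin m) ℝ, IsCoupling π := by
  have hn' : (0:ℝ) < n := by exact_mod_cast hn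
  have hm' : (0:ℝ) < m := by exact_mod_cast hm
  refine ⟨Matrix.of fun _ _ => 1 / ((n : ℝ) * m),
    fun i j => by simp only [Matrix.of_apply]; positivity, fun i => ?_, fun j => ?_⟩
  · simp only [Matrix.of_apply, Finset.sum_const, Finset.card_univ, Fintype.card_fin, nsmul_eq_mul]
    field_simp
  · simp only [Matrix.of_apply, Finset.sum_const, Finset.card_univ, Fintype.card_fin, nsmul_eq_mul]
    field_simp

/-- `C_k² ≤ S_k² + sup_{U ∈ S(d,k)} (1/m) ∑_j ‖(I_d − UUᵀ) y_j‖²`. -/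
theorem stmt3 (d k n m : ℕ) (hkd : k ≤ d) (hn : 0 < n) (hm : 0 < m)
    (x : Fin n → Fin d → ℝ) (y : Fin m → Fin d → ℝ) :
    sSup {s : ℝ | ∃ U : Matrix (Fin d) (Fin k) ℝ, Uᵀ * U = 1 ∧
        s = sInf {t : ℝ | ∃ π : Matrix (Fin n) (Fin m) ℝ, IsCoupling π ∧
          t = ∑ i, ∑ j, π i j * eucNormSq_enorm_port ((U * Uᵀ).mulVec (x i) - y j) ^ 2}} ≤
    sInf {t : ℝ | ∃ π : Matrix (Fin n) (Fin m) ℝ, IsCoupling π ∧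
        t = sSup {s : ℝ | ∃ U : Matrix (Fin d) (Fin k) ℝ, Uᵀ * U = 1 ∧
          s = ∑ i, ∑ j, π i j *
                eucNormSq_enorm_port ((U * Uᵀ).mulVec (x i) - (U * Uᵀ).mulVec (y j)) ^ 2}} +
    sSup {s : ℝ | ∃ U : Matrix (Fin d) (Fin k) ℝ, Uᵀ * U = 1 ∧
        s = (1 / (m : ℝ)) * ∑ j, eucNormSq_enorm_port ((1 - U * Uᵀ).mulVec (y j)) ^ 2} := by
  obtain ⟨U0, hU0⟩ := exists_stiefel (d := d) hkd
  obtain ⟨π0, hπ0⟩ := exists_coupling (n := n) (m := m) hn hm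
  have hm' : (0:ℝ) ≤ 1 / (m : ℝ) := by positivity
  -- bounded above of the H set
  have Hbdd : BddAbove {s : ℝ | ∃ U : Matrix (Fin d) (Fin k) ℝ, Uᵀ * U = 1 ∧
      s = (1 / (m : ℝ)) * ∑ j, eucNormSq_enorm_port ((1 - U * Uᵀ).mulVec (y j)) ^ 2} := by
    refine ⟨(1 / (m : ℝ)) * ∑ j, ∑ i, (y j) i ^ 2, ?_⟩
    rintro s ⟨U, hU, rfl⟩
    refine mul_le_mul_of_nonneg_left (Finset.sum_le_sum fun j _ => ?_) hm'
    rw [enorm_sq]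
    exact contract2 U hU (y j)
  apply csSup_le
  · exact ⟨_, U0, hU0, rfl⟩
  rintro s ⟨U, hU, rfl⟩
  rw [← sub_le_iff_le_add]
  apply le_csInf
  · exact ⟨_, π0, hπ0, rfl⟩
  rintro t ⟨π, hπ, rfl⟩
  rw [sub_le_iff_le_add]
  obtain ⟨hpos, hrow, hcol⟩ := hπ
  -- infimum is at most the value at π
  have h1 : sInf {t : ℝ | ∃ π' : Matrix (Fin n) (Fin m) ℝ, IsCoupling π' ∧
        t = ∑ i, ∑ j, π' i j * eucNormSq_enorm_port ((U * Uᵀ).mulVec (x i) - y j) ^ 2}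
      ≤ ∑ i, ∑ j, π i j * eucNormSq_enorm_port ((U * Uᵀ).mulVec (x i) - y j) ^ 2 := by
    apply csInf_le
    · refine ⟨0, ?_⟩
      rintro t ⟨π', hπ', rfl⟩
      exact Finset.sum_nonneg fun i _ => Finset.sum_nonneg fun j _ =>
        mul_nonneg (hπ'.1 i j) (sq_nonneg _)
    · exact ⟨π, ⟨hpos, hrow, hcol⟩, rfl⟩
  -- decomposition
  have h2 : ∑ i, ∑ j, π i j * eucNormSq_enorm_port ((U * Uᵀ).mulVec (x i) - y j) ^ 2
      = (∑ i, ∑ j, π i j * eucNormSq_enorm_port ((U * Uᵀ).mulVec (x i) - (U * Uᵀ).mulVec (y j)) ^ 2)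
        + (1 / (m : ℝ)) * ∑ j, eucNormSq_enorm_port ((1 - U * Uᵀ).mulVec (y j)) ^ 2 := by
    have step : ∀ i j, π i j * eucNormSq_enorm_port ((U * Uᵀ).mulVec (x i) - y j) ^ 2
        = π i j * eucNormSq_enorm_port ((U * Uᵀ).mulVec (x i) - (U * Uᵀ).mulVec (y j)) ^ 2
          + π i j * eucNormSq_enorm_port ((1 - U * Uᵀ).mulVec (y j)) ^ 2 := fun i j => by
      rw [enorm_sq, enorm_sq, enorm_sq, key_split U hU (x i) (y j)]
      ring
    calc ∑ i, ∑ j, π i j * eucNormSq_enorm_port ((U * Uᵀ).mulVec (x i) - y j) ^ 2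
        = ∑ i, ∑ j, (π i j * eucNormSq_enorm_port ((U * Uᵀ).mulVec (x i) - (U * Uᵀ).mulVec (y j)) ^ 2
            + π i j * eucNormSq_enorm_port ((1 - U * Uᵀ).mulVec (y j)) ^ 2) := by
          exact Finset.sum_congr rfl fun i _ => Finset.sum_congr rfl fun j _ => step i j
      _ = (∑ i, ∑ j, π i j * eucNormSq_enorm_port ((U * Uᵀ).mulVec (x i) - (U * Uᵀ).mulVec (y j)) ^ 2)
            + ∑ i, ∑ j, π i j * eucNormSq_enorm_port ((1 - U * Uᵀ).mulVec (y j)) ^ 2 := by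
          rw [← Finset.sum_add_distrib]
          exact Finset.sum_congr rfl fun i _ => Finset.sum_add_distrib
      _ = _ := by
          congr 1
          rw [Finset.sum_comm]
          rw [Finset.mul_sum]
          refine Finset.sum_congr rfl fun j _ => ?_
          rw [← Finset.sum_mul, hcol j]
  -- the middle term is at most the sup over U'
  have Gbdd : BddAbove {s : ℝ | ∃ U' : Matrix (Fin d) (Fin k) ℝ, U'ᵀ * U' = 1 ∧
      s = ∑ i, ∑ j, π i j * eucNormSq_enorm_port ((U' * U'ᵀ).mulVec (x i) - (U' * U'ᵀ).mulVec (y j)) ^ 2} := by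
    refine ⟨∑ i, ∑ j, π i j * ∑ l, (x i - y j) l ^ 2, ?_⟩
    rintro s ⟨U', hU', rfl⟩
    refine Finset.sum_le_sum fun i _ => Finset.sum_le_sum fun j _ => ?_
    refine mul_le_mul_of_nonneg_left ?_ (hpos i j)
    rw [enorm_sq, ← Matrix.mulVec_sub]
    exact contract1 U' hU' (x i - y j)
  have h3 : ∑ i, ∑ j, π i j * eucNormSq_enorm_port ((U * Uᵀ).mulVec (x i) - (U * Uᵀ).mulVec (y j)) ^ 2
      ≤ sSup {s : ℝ | ∃ U' : Matrix (Fin d) (Fin k) ℝ, U'ᵀ * U' = 1 ∧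
        s = ∑ i, ∑ j, π i j * eucNormSq_enorm_port ((U' * U'ᵀ).mulVec (x i) - (U' * U'ᵀ).mulVec (y j)) ^ 2} :=
    le_csSup Gbdd ⟨U, hU, rfl⟩
  have h4 : (1 / (m : ℝ)) * ∑ j, eucNormSq_enorm_port ((1 - U * Uᵀ).mulVec (y j)) ^ 2
      ≤ sSup {s : ℝ | ∃ U' : Matrix (Fin d) (Fin k) ℝ, U'ᵀ * U' = 1 ∧
        s = (1 / (m : ℝ)) * ∑ j, eucNormSq_enorm_port ((1 - U' * U'ᵀ).mulVec (y j)) ^ 2} :=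
    le_csSup Hbdd ⟨U, hU, rfl⟩
  linarith
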